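/- Let K be a bounded linear operator on H, and let Λ = (Λ_i)_{i∈I} and Γ = (Γ_i)_{i∈I} be two K-g-frames for H with synthesis operators T₁ and T₂ respectively, such that T₁ T₂* = 0. Let U₁, U₂ be bounded linear operators on H such that Range(T_j) ⊆ Range(U_j* T_j) for j = 1, 2. Then the g-sequence (Λ_i U₁ + Γ_i U₂)_{i∈I} is a K-g-frame for H. -/

import Mathlib

open ContinuousLinearMap
open scoped ENNReal

noncomputable section

variable {I : Type*} {H : Type*} [NormedAddCommGroup H] [InnerProductSpace ℂ H] [CompleteSpace H]
  {G : I → Type*} [∀ i, NormedAddCommGroup (G i)] [∀ i, InnerProductSpace ℂ (G i)]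
  [∀ i, CompleteSpace (G i)]

/-- `Λ` is a Bessel g-sequence: for some `B > 0`, `∑ᵢ ‖Λᵢ f‖² ≤ B ‖f‖²` for all `f`. -/
def IsGBessel (Λ : ∀ i, H →L[ℂ] G i) : Prop :=
  ∃ B : ℝ, 0 < B ∧ ∀ f : H,
    Summable (fun i => ‖Λ i f‖ ^ 2) ∧ (∑' i, ‖Λ i f‖ ^ 2) ≤ B * ‖f‖ ^ 2

/-- `Λ` is a `K`-g-frame: for some `A, B > 0`,
`A ‖K* f‖² ≤ ∑ᵢ ‖Λᵢ f‖² ≤ B ‖f‖²` for all `f`. -/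
def IsKgFrame (K : H →L[ℂ] H) (Λ : ∀ i, H →L[ℂ] G i) : Prop :=
  ∃ A B : ℝ, 0 < A ∧ 0 < B ∧ ∀ f : H,
    Summable (fun i => ‖Λ i f‖ ^ 2) ∧
    A * ‖ContinuousLinearMap.adjoint K f‖ ^ 2 ≤ (∑' i, ‖Λ i f‖ ^ 2) ∧
    (∑' i, ‖Λ i f‖ ^ 2) ≤ B * ‖f‖ ^ 2

/-- `T : (⊕ᵢ Hᵢ)_{ℓ²} → H` is the synthesis operator of `Λ`, characterized by its adjoint
(the analysis operator) satisfying `(T* f)ᵢ = Λᵢ f` for all `f`. -/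
def IsSynthesis (Λ : ∀ i, H →L[ℂ] G i) (T : lp G 2 →L[ℂ] H) : Prop :=
  ∀ (f : H) (i : I), (ContinuousLinearMap.adjoint T f : ∀ i, G i) i = Λ i f

/-- `Γ` is a `K`-dual (Bessel g-sequence) of `Λ`: `K f = ∑ᵢ Λᵢ* (Γᵢ f)` for all `f`,
the sum converging in `H`. -/
def IsKDual (K : H →L[ℂ] H) (Λ Γ : ∀ i, H →L[ℂ] G i) : Prop :=
  ∀ f : H, HasSum (fun i => ContinuousLinearMap.adjoint (Λ i) (Γ i f)) (K f)


lemma douglas_maj {X Y : Type*} [NormedAddCommGroup X] [InnerProductSpace ℂ X] [CompleteSpace X]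
    [NormedAddCommGroup Y] [InnerProductSpace ℂ Y] [CompleteSpace Y]
    (S T : X →L[ℂ] Y) (h : Set.range S ⊆ Set.range T) :
    ∃ c : ℝ, 0 < c ∧ ∀ y : Y,
      ‖ContinuousLinearMap.adjoint S y‖ ≤ c * ‖ContinuousLinearMap.adjoint T y‖ := by
  set N : Submodule ℂ X := (LinearMap.ker (T : X →ₗ[ℂ] Y))ᗮ with hN
  haveI : CompleteSpace N := (Submodule.isClosed_orthogonal _).completeSpace_coe
  haveI : CompleteSpace (LinearMap.ker (T : X →ₗ[ℂ] Y)) := T.isClosed_ker.completeSpace_coe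
  set T' : N →L[ℂ] Y := T ∘L N.subtypeL with hT'
  have hinj : Function.Injective (T' : N →ₗ[ℂ] Y) := by
    intro a b hab
    have hab' : T (a : X) = T (b : X) := hab
    have hk : ((a : X) - b) ∈ LinearMap.ker (T : X →ₗ[ℂ] Y) := by
      simp only [LinearMap.mem_ker, map_sub, ContinuousLinearMap.coe_coe, hab', sub_self]
    have hn : ((a : X) - b) ∈ N := sub_mem a.2 b.2
    have hz : ((a : X) - b) = 0 := by
      have := (Submodule.mem_orthogonal _ _).1 hn _ hk
      simpa [inner_self_eq_zero] using this
    exact Subtype.ext (sub_eq_zero.mp hz)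
  have hmem : ∀ x : X, S x ∈ LinearMap.range (T' : N →ₗ[ℂ] Y) := by
    intro x
    obtain ⟨z, hz⟩ := h ⟨x, rfl⟩
    obtain ⟨k, hk, n, hn, rfl⟩ := (LinearMap.ker (T : X →ₗ[ℂ] Y)).exists_add_mem_mem_orthogonal z
    refine ⟨⟨n, hn⟩, ?_⟩
    have : T k = 0 := hk
    simpa [hT', this] using hz
  set e := LinearEquiv.ofInjective (T' : N →ₗ[ℂ] Y) hinj with he
  set C₀ : X →ₗ[ℂ] N :=
    e.symm.toLinearMap ∘ₗ ((S : X →ₗ[ℂ] Y).codRestrict (LinearMap.range (T' : N →ₗ[ℂ] Y)) hmem)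
    with hC₀
  have hTC : ∀ x : X, T' (C₀ x) = S x := by
    intro x
    have h1 : (e (C₀ x) : Y) = T' (C₀ x) := LinearEquiv.ofInjective_apply _ _
    have h2 : e (C₀ x) = ⟨S x, hmem x⟩ := by
      simp only [hC₀, LinearMap.coe_comp, LinearEquiv.coe_coe, Function.comp_apply,
        LinearEquiv.apply_symm_apply]
      exact Subtype.ext rfl
    rw [h2] at h1
    exact h1.symm
  have hgraph : IsClosed (C₀.graph : Set (X × N)) := by
    have hset : (C₀.graph : Set (X × N)) = (fun p : X × N => S p.1 - T' p.2) ⁻¹' {0} := by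
      ext p
      simp only [SetLike.mem_coe, LinearMap.mem_graph_iff, Set.mem_preimage,
        Set.mem_singleton_iff, sub_eq_zero]
      constructor
      · intro hp; rw [hp, hTC p.1]
      · intro hp
        exact hinj (by simpa [hTC p.1] using hp.symm)
    rw [hset]
    exact isClosed_singleton.preimage ((S.continuous.comp continuous_fst).sub
      (T'.continuous.comp continuous_snd))
  have hcont : Continuous C₀ := C₀.continuous_of_isClosed_graph hgraph
  set C : X →L[ℂ] N := ⟨C₀, hcont⟩ with hC
  have hScomp : S = T' ∘L C := by
    ext x; exact (hTC x).symm
  have hsub : ‖N.subtypeL‖ ≤ 1 :=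
    ContinuousLinearMap.opNorm_le_bound _ zero_le_one (fun x => by simp)
  refine ⟨‖ContinuousLinearMap.adjoint C‖ + 1, by positivity, fun y => ?_⟩
  have h1 : ContinuousLinearMap.adjoint S y =
      ContinuousLinearMap.adjoint C (ContinuousLinearMap.adjoint T' y) := by
    rw [hScomp, ContinuousLinearMap.adjoint_comp]; rfl
  have h2 : ‖ContinuousLinearMap.adjoint T' y‖ ≤ ‖ContinuousLinearMap.adjoint T y‖ := by
    have : ContinuousLinearMap.adjoint T' y =
        ContinuousLinearMap.adjoint N.subtypeL (ContinuousLinearMap.adjoint T y) := by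
      rw [hT', ContinuousLinearMap.adjoint_comp]; rfl
    rw [this]
    calc ‖ContinuousLinearMap.adjoint N.subtypeL (ContinuousLinearMap.adjoint T y)‖
        ≤ ‖ContinuousLinearMap.adjoint N.subtypeL‖ * ‖ContinuousLinearMap.adjoint T y‖ :=
          ContinuousLinearMap.le_opNorm _ _
      _ ≤ 1 * ‖ContinuousLinearMap.adjoint T y‖ := by
          apply mul_le_mul_of_nonneg_right _ (norm_nonneg _)
          rw [LinearIsometryEquiv.norm_map (ContinuousLinearMap.adjoint) N.subtypeL]
          exact hsub
      _ = ‖ContinuousLinearMap.adjoint T y‖ := one_mul _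
  calc ‖ContinuousLinearMap.adjoint S y‖
      ≤ ‖ContinuousLinearMap.adjoint C‖ * ‖ContinuousLinearMap.adjoint T' y‖ := by
        rw [h1]; exact ContinuousLinearMap.le_opNorm _ _
    _ ≤ (‖ContinuousLinearMap.adjoint C‖ + 1) * ‖ContinuousLinearMap.adjoint T y‖ := by
        apply mul_le_mul (by linarith) h2 (norm_nonneg _) (by positivity)

set_option linter.unusedSectionVars false in
lemma lp_two_sq (x : lp G 2) :
    Summable (fun i => ‖(x : ∀ i, G i) i‖ ^ 2) ∧
      (∑' i, ‖(x : ∀ i, G i) i‖ ^ 2) = ‖x‖ ^ 2 := by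
  have hp : 0 < (2 : ℝ≥0∞).toReal := by norm_num
  have h2 : ∀ a : ℝ, a ^ (2 : ℝ≥0∞).toReal = a ^ 2 := fun a => by
    rw [show (2 : ℝ≥0∞).toReal = ((2 : ℕ) : ℝ) by norm_num, Real.rpow_natCast]
  have hs := (lp.memℓp x).summable hp
  constructor
  · simpa only [h2] using hs
  · have := lp.norm_rpow_eq_tsum hp x
    simp only [h2] at this
    exact this.symm


set_option maxHeartbeats 1000000 in
/-- if `Λ`, `Γ` are `K`-g-frames with synthesis operators `T₁`, `T₂`,
`T₁ T₂* = 0`, and `Range(T_j) ⊆ Range(U_j* T_j)` for `j = 1, 2`, then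
`(Λᵢ U₁ + Γᵢ U₂)ᵢ` is a `K`-g-frame. -/
theorem isKgFrame_comp_add_comp_of_range_subset
    (K : H →L[ℂ] H) (Λ Γ : ∀ i, H →L[ℂ] G i)
    (hΛ : IsKgFrame K Λ) (hΓ : IsKgFrame K Γ)
    (T₁ T₂ : lp G 2 →L[ℂ] H) (hT₁ : IsSynthesis Λ T₁) (hT₂ : IsSynthesis Γ T₂)
    (h0 : T₁ ∘L ContinuousLinearMap.adjoint T₂ = 0)
    (U₁ U₂ : H →L[ℂ] H)
    (h₁ : Set.range T₁ ⊆ Set.range (ContinuousLinearMap.adjoint U₁ ∘L T₁))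
    (h₂ : Set.range T₂ ⊆ Set.range (ContinuousLinearMap.adjoint U₂ ∘L T₂)) :
    IsKgFrame K (fun i => Λ i ∘L U₁ + Γ i ∘L U₂) := by
  unfold IsKgFrame at hΛ ⊢
  unfold IsSynthesis at hT₁ hT₂
  obtain ⟨A₁, B₁, hA₁, hB₁, hfr⟩ := hΛ
  obtain ⟨c, hc, hdug⟩ := douglas_maj T₁ (ContinuousLinearMap.adjoint U₁ ∘L T₁) h₁
  -- rewrite the adjoint of U₁* T₁
  have hadj : ∀ y : H, ContinuousLinearMap.adjoint (ContinuousLinearMap.adjoint U₁ ∘L T₁) y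
      = ContinuousLinearMap.adjoint T₁ (U₁ y) := by
    intro y
    rw [ContinuousLinearMap.adjoint_comp, ContinuousLinearMap.adjoint_adjoint]
    rfl
  refine ⟨A₁ / c ^ 2, (‖ContinuousLinearMap.adjoint T₁‖ * ‖U₁‖) ^ 2
      + (‖ContinuousLinearMap.adjoint T₂‖ * ‖U₂‖) ^ 2 + 1, by positivity, by positivity, fun f => ?_⟩
  set u := ContinuousLinearMap.adjoint T₁ (U₁ f) with hu
  set v := ContinuousLinearMap.adjoint T₂ (U₂ f) with hv
  set w : lp G 2 := u + v with hw
  have hwi : ∀ i, ‖(Λ i ∘L U₁ + Γ i ∘L U₂) f‖ ^ 2 = ‖(w : ∀ i, G i) i‖ ^ 2 := by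
    intro i
    have : (w : ∀ i, G i) i = (Λ i ∘L U₁ + Γ i ∘L U₂) f := by
      have := lp.coeFn_add u v
      rw [hw]
      simp only [lp.coeFn_add, Pi.add_apply, hu, hv, hT₁, hT₂,
        ContinuousLinearMap.add_apply, ContinuousLinearMap.comp_apply]
    rw [this]
  obtain ⟨hsum, htsum⟩ := lp_two_sq w
  have hsum' : Summable (fun i => ‖(Λ i ∘L U₁ + Γ i ∘L U₂) f‖ ^ 2) := by
    simpa only [hwi] using hsum
  have htsum' : (∑' i, ‖(Λ i ∘L U₁ + Γ i ∘L U₂) f‖ ^ 2) = ‖w‖ ^ 2 := by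
    rw [← htsum]; exact tsum_congr hwi
  -- orthogonality
  have hinner : inner ℂ u v = (0 : ℂ) := by
    rw [hu, ContinuousLinearMap.adjoint_inner_left]
    have : T₁ v = 0 := by
      rw [hv, ← ContinuousLinearMap.comp_apply, h0]
      simp
    rw [this, inner_zero_right]
  have hpyth : ‖w‖ ^ 2 = ‖u‖ ^ 2 + ‖v‖ ^ 2 := by
    rw [hw, @norm_add_sq ℂ _ _ _ _ u v, hinner]
    simp
  refine ⟨hsum', ?_, ?_⟩
  · -- lower bound
    obtain ⟨hsΛ, hlow, _⟩ := hfr f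
    have h1 : (∑' i, ‖Λ i f‖ ^ 2) = ‖ContinuousLinearMap.adjoint T₁ f‖ ^ 2 := by
      obtain ⟨_, ht⟩ := lp_two_sq (ContinuousLinearMap.adjoint T₁ f)
      rw [← ht]
      exact tsum_congr fun i => by rw [hT₁ f i]
    have h2 : ‖ContinuousLinearMap.adjoint T₁ f‖ ≤ c * ‖u‖ := by
      have := hdug f
      rwa [hadj f, ← hu] at this
    have h3 : ‖ContinuousLinearMap.adjoint T₁ f‖ ^ 2 ≤ c ^ 2 * ‖u‖ ^ 2 := by
      nlinarith [norm_nonneg (ContinuousLinearMap.adjoint T₁ f), norm_nonneg u]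
    rw [htsum', hpyth]
    rw [h1] at hlow
    have hv2 : (0:ℝ) ≤ ‖v‖ ^ 2 := by positivity
    rw [div_mul_eq_mul_div, div_le_iff₀ (by positivity)]
    nlinarith
  · -- upper bound
    rw [htsum', hpyth]
    have hu' : ‖u‖ ≤ ‖ContinuousLinearMap.adjoint T₁‖ * ‖U₁‖ * ‖f‖ := by
      calc ‖u‖ ≤ ‖ContinuousLinearMap.adjoint T₁‖ * ‖U₁ f‖ := ContinuousLinearMap.le_opNorm _ _
        _ ≤ ‖ContinuousLinearMap.adjoint T₁‖ * (‖U₁‖ * ‖f‖) := by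
            exact mul_le_mul_of_nonneg_left (ContinuousLinearMap.le_opNorm _ _) (norm_nonneg _)
        _ = _ := by ring
    have hv' : ‖v‖ ≤ ‖ContinuousLinearMap.adjoint T₂‖ * ‖U₂‖ * ‖f‖ := by
      calc ‖v‖ ≤ ‖ContinuousLinearMap.adjoint T₂‖ * ‖U₂ f‖ := ContinuousLinearMap.le_opNorm _ _
        _ ≤ ‖ContinuousLinearMap.adjoint T₂‖ * (‖U₂‖ * ‖f‖) := by
            exact mul_le_mul_of_nonneg_left (ContinuousLinearMap.le_opNorm _ _) (norm_nonneg _)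
        _ = _ := by ring
    nlinarith [norm_nonneg u, norm_nonneg v, norm_nonneg f, sq_nonneg ‖f‖,
      mul_nonneg (mul_nonneg (norm_nonneg (ContinuousLinearMap.adjoint T₁)) (norm_nonneg U₁)) (norm_nonneg f),
      mul_nonneg (mul_nonneg (norm_nonneg (ContinuousLinearMap.adjoint T₂)) (norm_nonneg U₂)) (norm_nonneg f)]
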